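/- (Picone's identity.) Let E be a real inner product space, Ω ⊆ E open, p ∈ (1,∞), and let u, v : E → ℝ be differentiable on Ω with u ≥ 0 and v > 0 on Ω. Define L(u,v) = ‖∇u‖^p + (p−1)(u^p/v^p)‖∇v‖^p − p(u^{p−1}/v^{p−1})‖∇v‖^{p−2}⟨∇u,∇v⟩ and R(u,v) = ‖∇u‖^p − ‖∇v‖^{p−2}⟨∇(u^p/v^{p−1}),∇v⟩, with the convention that terms containing the factor ‖∇v‖^{p−2} are interpreted as 0 at points where ∇v = 0. Then L(u,v) = R(u,v) at every point of Ω. -/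

import Mathlib

open Set
open scoped RealInnerProductSpace

/-- Picone's identity: for `p ∈ (1,∞)` and differentiable `u ≥ 0`,
`v > 0` on an open set `Ω`, the Picone expressions
`L(u,v) = ‖∇u‖^p + (p-1)(u^p/v^p)‖∇v‖^p − p(u^{p-1}/v^{p-1})‖∇v‖^{p-2}⟨∇u,∇v⟩`
and `R(u,v) = ‖∇u‖^p − ‖∇v‖^{p-2}⟨∇(u^p/v^{p-1}),∇v⟩` agree on `Ω`.
(Here real powers are `Real.rpow`, so `‖∇v‖^(p-2) = 0` when `∇v = 0` and
`p ≠ 2`, implementing the stated convention; for `p = 2` the inner-product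
factor vanishes anyway.) -/
private lemma picone_grad {E : Type*} [NormedAddCommGroup E] [InnerProductSpace ℝ E]
    [CompleteSpace E]
    (p : ℝ) (hp : 1 < p) (u v : E → ℝ) (x : E)
    (hu : DifferentiableAt ℝ u x) (hv : DifferentiableAt ℝ v x)
    (hv0 : 0 < v x) :
    gradient (fun y => u y ^ p / v y ^ (p - 1)) x
      = ((v x ^ (p-1))⁻¹ * (p * u x ^ (p-1))) • gradient u x
        + (u x ^ p * (-((v x ^ (p-1))^2)⁻¹ * ((p-1) * v x ^ (p-1-1)))) • gradient v x := by
  set a := gradient u x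
  set b := gradient v x
  have hX : v x ^ (p-1) ≠ 0 := (Real.rpow_pos_of_pos hv0 _).ne'
  have hFu : HasFDerivAt u (InnerProductSpace.toDual ℝ E a) x :=
    hu.hasGradientAt.hasFDerivAt
  have hFv : HasFDerivAt v (InnerProductSpace.toDual ℝ E b) x :=
    hv.hasGradientAt.hasFDerivAt
  have h1 : HasFDerivAt (fun y => u y ^ p)
      ((p * u x ^ (p-1)) • InnerProductSpace.toDual ℝ E a) x :=
    (Real.hasDerivAt_rpow_const (Or.inr hp.le)).comp_hasFDerivAt x hFu
  have h2 : HasFDerivAt (fun y => v y ^ (p-1))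
      (((p-1) * v x ^ (p-1-1)) • InnerProductSpace.toDual ℝ E b) x :=
    (Real.hasDerivAt_rpow_const (Or.inl hv0.ne')).comp_hasFDerivAt x hFv
  have h3 : HasFDerivAt (fun y => (v y ^ (p-1))⁻¹)
      ((-((v x ^ (p-1))^2)⁻¹) • (((p-1) * v x ^ (p-1-1)) • InnerProductSpace.toDual ℝ E b)) x := by
    have := (hasDerivAt_inv hX).comp_hasFDerivAt x h2
    exact this
  have h4 := h1.mul h3
  have h5 : HasGradientAt (fun y => u y ^ p / v y ^ (p - 1))
      (((v x ^ (p-1))⁻¹ * (p * u x ^ (p-1))) • a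
        + (u x ^ p * (-((v x ^ (p-1))^2)⁻¹ * ((p-1) * v x ^ (p-1-1)))) • b) x := by
    have := hasFDerivAt_iff_hasGradientAt.mp h4
    simp only [div_eq_mul_inv, map_add, map_smul, LinearIsometryEquiv.symm_apply_apply] at this ⊢
    convert this using 1
    case e'_7 => rfl
    case e'_8 => module
  exact h5.gradient

theorem picone_identity
    {E : Type*} [NormedAddCommGroup E] [InnerProductSpace ℝ E] [CompleteSpace E]
    (Ω : Set E) (hΩ : IsOpen Ω) (p : ℝ) (hp : 1 < p)
    (u v : E → ℝ)
    (hu : ∀ x ∈ Ω, DifferentiableAt ℝ u x)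
    (hv : ∀ x ∈ Ω, DifferentiableAt ℝ v x)
    (hu0 : ∀ x ∈ Ω, 0 ≤ u x)
    (hv0 : ∀ x ∈ Ω, 0 < v x) :
    ∀ x ∈ Ω,
      ‖gradient u x‖ ^ p
        + (p - 1) * (u x ^ p / v x ^ p) * ‖gradient v x‖ ^ p
        - p * (u x ^ (p - 1) / v x ^ (p - 1)) * ‖gradient v x‖ ^ (p - 2)
            * ⟪gradient u x, gradient v x⟫
      = ‖gradient u x‖ ^ p
        - ‖gradient v x‖ ^ (p - 2)
            * ⟪gradient (fun y => u y ^ p / v y ^ (p - 1)) x, gradient v x⟫ := by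
  intro x hx
  rw [picone_grad p hp u v x (hu x hx) (hv x hx) (hv0 x hx)]
  set a := gradient u x
  set b := gradient v x
  rw [inner_add_left, real_inner_smul_left, real_inner_smul_left,
    real_inner_self_eq_norm_mul_norm]
  have hvx := hv0 x hx
  have hV1 : v x ^ (p-1) ≠ 0 := (Real.rpow_pos_of_pos hvx _).ne'
  have hV : v x ^ p ≠ 0 := (Real.rpow_pos_of_pos hvx _).ne'
  have hsq : (v x ^ (p-1))^2 = v x ^ (p-1-1) * v x ^ p := by
    rw [sq, ← Real.rpow_add hvx, ← Real.rpow_add hvx]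
    ring_nf
  have hkey : ‖b‖ ^ (p-2) * ‖b‖ ^ 2 = ‖b‖ ^ p := by
    rw [sq]
    rcases eq_or_ne b 0 with hb | hb
    · simp [hb, Real.zero_rpow (by positivity : p ≠ 0)]
    · have hb' : (0:ℝ) < ‖b‖ := norm_pos_iff.mpr hb
      calc ‖b‖^(p-2)*(‖b‖*‖b‖) = ‖b‖^(p-2) * ‖b‖^(2:ℝ) := by
            rw [Real.rpow_two, sq]
        _ = ‖b‖^(p-2+2) := (Real.rpow_add hb' _ _).symm
        _ = ‖b‖^p := by norm_num
  rw [hsq, ← hkey]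
  field_simp
  ring
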